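/- Suppose f(y) > 0 for all y ∈ Y, and suppose α > p*/q*. Then the loss function satisfies the Consistent Loss property: for every infeasible point y ∈ Y (i.e., every y with g(y) > 0), L(y) > p*, so the loss of every infeasible assignment is strictly higher than the optimal value p* of the CMPE problem. -/
import Mathlib


/-- Consistent Loss property: if `f` is strictly positive and `α > p*/q*`,
then the loss of every infeasible assignment exceeds the optimal value `p*`. -/
theorem cmpe_loss_consistent {Y : Type*} [Fintype Y] [Nonempty Y]
    (f g : Y → ℝ) (α : ℝ)
    (hfeas : (Finset.univ.filter (fun y => g y ≤ 0)).Nonempty)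
    (hinfeas : (Finset.univ.filter (fun y => 0 < g y)).Nonempty)
    (hf : ∀ y, 0 < f y)
    (pstar qstar : ℝ)
    (hp : pstar = (Finset.univ.filter (fun y => g y ≤ 0)).inf' hfeas f)
    (hq : qstar = (Finset.univ.filter (fun y => 0 < g y)).inf' hinfeas (fun y => f y + g y))
    (hα : α > pstar / qstar)
    (L : Y → ℝ)
    (hL : ∀ y, L y = if g y ≤ 0 then f y else α * (f y + g y)) :
    ∀ y : Y, 0 < g y → L y > pstar := by
  intro y hy
  have hpq : 0 < pstar := by
    rw [hp]
    obtain ⟨z, hz, hzmin⟩ := Finset.exists_mem_eq_inf' hfeas f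
    rw [hzmin]; exact hf z
  have hqpos : 0 < qstar := by
    rw [hq]
    obtain ⟨z, hz, hzmin⟩ := Finset.exists_mem_eq_inf' hinfeas (fun y => f y + g y)
    rw [hzmin]
    simp only [Finset.mem_filter] at hz
    have := hf z
    linarith [hz.2]
  have hαq : α * qstar > pstar := by
    have := (div_lt_iff₀ hqpos).mp hα
    linarith
  have hyq : qstar ≤ f y + g y := by
    rw [hq]
    exact Finset.inf'_le _ (by simp [hy])
  have hαpos : 0 < α := lt_of_le_of_lt (div_nonneg hpq.le hqpos.le) hα
  rw [hL y, if_neg (not_le.mpr hy)]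
  calc pstar < α * qstar := hαq
    _ ≤ α * (f y + g y) := by nlinarith
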